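/- Let $X \in \mathbb{R}^{n \times n}$ be a positive semi-definite matrix, $h \in \mathbb{R}^n$, and $\sigma > 0$. Define $Y = X - \frac{1}{h^\top X h + \sigma^2} X h h^\top X$. Then $\ker(Y) = \ker(X)$, and in particular $\mathrm{rank}(Y) = \mathrm{rank}(X)$. -/

import Mathlib

open Matrix

lemma vecMulVec_mulVec_aux {n : ℕ} (a b v : Fin n → ℝ) :
    (vecMulVec a b).mulVec v = (b ⬝ᵥ v) • a := by
  funext i
  simp only [vecMulVec, mulVec, dotProduct, Pi.smul_apply, smul_eq_mul, of_apply]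
  rw [Finset.sum_mul]
  exact Finset.sum_congr rfl fun j _ => by ring

/-- Lemma `proprank`: the rank-one posterior update preserves the kernel,
hence the rank, of a positive semidefinite matrix. -/
theorem stmt_0 {n : ℕ} (X : Matrix (Fin n) (Fin n) ℝ) (hX : X.PosSemidef)
    (h : Fin n → ℝ) (σ : ℝ) (hσ : 0 < σ)
    (Y : Matrix (Fin n) (Fin n) ℝ)
    (hY : Y = X - (h ⬝ᵥ X.mulVec h + σ ^ 2)⁻¹ •
      vecMulVec (X.mulVec h) (X.mulVec h)) :
    (∀ v : Fin n → ℝ, Y.mulVec v = 0 ↔ X.mulVec v = 0) ∧ Y.rank = X.rank := by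
  set c : ℝ := h ⬝ᵥ X.mulVec h + σ ^ 2 with hc
  have hXh : (0:ℝ) ≤ h ⬝ᵥ X.mulVec h := by
    have := hX.dotProduct_mulVec_nonneg h
    simpa using this
  have hc0 : 0 < c := by nlinarith [sq_nonneg σ]
  have hsymm : Xᵀ = X := hX.1
  have hdot : ∀ v : Fin n → ℝ, X.mulVec h ⬝ᵥ v = h ⬝ᵥ X.mulVec v := by
    intro v
    rw [dotProduct_mulVec h, ← mulVec_transpose, hsymm]
  have hYv : ∀ v : Fin n → ℝ,
      Y.mulVec v = X.mulVec v - c⁻¹ • ((h ⬝ᵥ X.mulVec v) • X.mulVec h) := by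
    intro v
    rw [hY, sub_mulVec, smul_mulVec, vecMulVec_mulVec_aux, hdot]
  have hker : ∀ v : Fin n → ℝ, Y.mulVec v = 0 ↔ X.mulVec v = 0 := by
    intro v
    constructor
    · intro hv
      have hXv : X.mulVec v = c⁻¹ • ((h ⬝ᵥ X.mulVec v) • X.mulVec h) := by
        have h1 := hYv v
        rw [hv, eq_comm, sub_eq_zero] at h1
        exact h1
      set t : ℝ := h ⬝ᵥ X.mulVec v with ht
      have h2 : t = c⁻¹ * (t * (h ⬝ᵥ X.mulVec h)) := by
        conv_lhs => rw [ht, hXv]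
        simp [dotProduct_smul, smul_eq_mul]
      have ht0 : t = 0 := by
        have hcne : c ≠ 0 := ne_of_gt hc0
        field_simp at h2
        have h3 : t * (c - h ⬝ᵥ X.mulVec h) = 0 := by linarith [h2]
        have h4 : c - h ⬝ᵥ X.mulVec h = σ ^ 2 := by rw [hc]; ring
        rw [h4] at h3
        rcases mul_eq_zero.mp h3 with h3 | h3
        · exact h3
        · exfalso; nlinarith
      rw [hXv, ht0]
      simp
    · intro hv
      rw [hYv v, hv]
      simp
  refine ⟨hker, ?_⟩
  have hkerL : LinearMap.ker Y.mulVecLin = LinearMap.ker X.mulVecLin := by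
    ext v
    simpa [LinearMap.mem_ker, mulVecLin_apply] using hker v
  have h1 := Y.mulVecLin.finrank_range_add_finrank_ker
  have h2 := X.mulVecLin.finrank_range_add_finrank_ker
  rw [hkerL] at h1
  unfold Matrix.rank
  omega
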